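/- Let m ≥ 1, let B₁ be the m×m lower bidiagonal Toeplitz matrix with 1 on the diagonal and −1 on the first subdiagonal, and let σ ∈ ℂ with σ ≠ 1. Define the lower triangular Toeplitz matrix B̃ by B̃(i,j) = 0 for i < j, B̃(i,i) = (1−σ)⁻¹, and B̃(i,j) = (1−σ)⁻¹·σ^{i−j−1}/(σ−1)^{i−j} for i > j. Then (I − σ·B₁)·B̃ = B₁; in particular, since I − σ·B₁ is invertible, B̃ = (I − σ·B₁)⁻¹·B₁, and B̃ is lower triangular with all diagonal entries equal to (1−σ)⁻¹, so its only eigenvalue is (1−σ)⁻¹ with multiplicity m. -/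

import Mathlib

open Matrix Polynomial

/-- The explicit lower triangular Toeplitz matrix B̃ satisfies
(I − σB₁)·B̃ = B₁, hence B̃ = (I − σB₁)⁻¹·B₁, and its characteristic polynomial
is (X − (1−σ)⁻¹)^m, i.e. its only eigenvalue is (1−σ)⁻¹ with multiplicity m. -/
theorem transformed_update_coefficient
    (m : ℕ) (hm : 1 ≤ m) (σ : ℂ) (hσ : σ ≠ 1)
    (B₁ : Matrix (Fin m) (Fin m) ℂ)
    (hB₁ : ∀ i j : Fin m, B₁ i j =
      if i = j then 1 else if (i : ℕ) = (j : ℕ) + 1 then -1 else 0)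
    (Bt : Matrix (Fin m) (Fin m) ℂ)
    (hBt : ∀ i j : Fin m, Bt i j =
      if (i : ℕ) < (j : ℕ) then 0
      else if i = j then (1 - σ)⁻¹
      else (1 - σ)⁻¹ * σ ^ ((i : ℕ) - (j : ℕ) - 1) / (σ - 1) ^ ((i : ℕ) - (j : ℕ))) :
    (1 - σ • B₁) * Bt = B₁ ∧
    Bt = (1 - σ • B₁)⁻¹ * B₁ ∧
    Bt.charpoly = (X - C ((1 - σ)⁻¹)) ^ m := by
  have h1σ : (1 : ℂ) - σ ≠ 0 := sub_ne_zero.mpr (fun h => hσ h.symm)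
  have hσ1 : σ - 1 ≠ 0 := sub_ne_zero.mpr hσ
  -- Part 1: (1 - σ•B₁) * Bt = B₁
  have hmul : (1 - σ • B₁) * Bt = B₁ := by
    ext i j
    rw [Matrix.mul_apply]
    have hA : ∀ k : Fin m, (1 - σ • B₁) i k * Bt k j
        = (if i = k then (1 - σ) * Bt k j else 0)
          + (if (i : ℕ) = (k : ℕ) + 1 then σ * Bt k j else 0) := by
      intro k
      simp only [Matrix.sub_apply, Matrix.one_apply, Matrix.smul_apply, hB₁, smul_eq_mul]
      by_cases h : i = k
      · subst h
        have h2 : ¬ ((i : ℕ) = (i : ℕ) + 1) := by omega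
        simp only [if_pos rfl, if_neg h2, add_zero, if_true]
        ring
      · by_cases h3 : (i : ℕ) = (k : ℕ) + 1
        · simp only [if_neg h, if_pos h3, zero_add]
          ring
        · simp only [if_neg h, if_neg h3, zero_add]
          ring
    rw [Finset.sum_congr rfl (fun k _ => hA k), Finset.sum_add_distrib]
    have hs1 : (∑ k : Fin m, if i = k then (1 - σ) * Bt k j else 0)
        = (1 - σ) * Bt i j := by
      simp [Finset.sum_ite_eq]
    rw [hs1]
    by_cases hi : (i : ℕ) = 0
    · have hs2 : (∑ k : Fin m, if (i : ℕ) = (k : ℕ) + 1 then σ * Bt k j else 0) = 0 := by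
        apply Finset.sum_eq_zero
        intro k _
        rw [if_neg]; omega
      rw [hs2, add_zero, hBt, hB₁]
      by_cases hj : i = j
      · subst hj
        simp only [lt_irrefl, if_neg (lt_irrefl _), if_pos rfl]
        field_simp
        simp [h1σ]
      · have hij : (i : ℕ) < (j : ℕ) := by
          rcases Nat.lt_or_ge (i : ℕ) (j : ℕ) with h | h
          · exact h
          · exact absurd (Fin.ext (by omega)) hj
        rw [if_pos hij, if_neg hj, if_neg (by omega : ¬ (i : ℕ) = (j : ℕ) + 1)]
        ring
    · -- i.val > 0
      have hilt : (i : ℕ) - 1 < m := by omega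
      set k₀ : Fin m := ⟨(i : ℕ) - 1, hilt⟩ with hk₀def
      have hk₀ : (k₀ : ℕ) = (i : ℕ) - 1 := rfl
      have hs2 : (∑ k : Fin m, if (i : ℕ) = (k : ℕ) + 1 then σ * Bt k j else 0)
          = σ * Bt k₀ j := by
        rw [Finset.sum_eq_single k₀]
        · rw [if_pos (by omega)]
        · intro k _ hk
          rw [if_neg]
          intro h
          exact hk (Fin.ext (by omega))
        · intro h; exact absurd (Finset.mem_univ k₀) h
      rw [hs2, hBt, hBt, hB₁, hk₀]
      simp only [Fin.ext_iff, hk₀]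
      rcases Nat.lt_or_ge (i : ℕ) (j : ℕ) with hlt | hge
      · rw [if_pos hlt, if_pos (by omega : (i : ℕ) - 1 < (j : ℕ)),
          if_neg (by omega : ¬ (i : ℕ) = (j : ℕ)),
          if_neg (by omega : ¬ (i : ℕ) = (j : ℕ) + 1)]
        ring
      · rcases Nat.eq_or_lt_of_le hge with heq | hgt
        · -- i = j
          rw [if_neg (by omega : ¬ (i : ℕ) < (j : ℕ)), if_pos heq.symm,
            if_pos (by omega : (i : ℕ) - 1 < (j : ℕ)), if_pos heq.symm]
          field_simp
          ring
        · rcases Nat.eq_or_lt_of_le hgt with heq1 | hgt1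
          · -- i = j + 1
            have e1 : (i : ℕ) - (j : ℕ) = 1 := by omega
            have e2 : (i : ℕ) - (j : ℕ) - 1 = 0 := by omega
            rw [if_neg (by omega : ¬ (i : ℕ) < (j : ℕ)),
              if_neg (by omega : ¬ (i : ℕ) = (j : ℕ)),
              if_neg (by omega : ¬ (i : ℕ) - 1 < (j : ℕ)),
              if_pos (by omega : (i : ℕ) - 1 = (j : ℕ)),
              if_neg (by omega : ¬ (i : ℕ) = (j : ℕ)),
              if_pos (by omega : (i : ℕ) = (j : ℕ) + 1), e2, e1]
            field_simp
            ring
          · -- i > j + 1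
            obtain ⟨e, he⟩ : ∃ e, (i : ℕ) - (j : ℕ) = e + 2 := ⟨(i : ℕ) - (j : ℕ) - 2, by omega⟩
            have e1 : (i : ℕ) - (j : ℕ) - 1 = e + 1 := by omega
            have e2 : (i : ℕ) - 1 - (j : ℕ) = e + 1 := by omega
            have e3 : (i : ℕ) - 1 - (j : ℕ) - 1 = e := by omega
            rw [if_neg (by omega : ¬ (i : ℕ) < (j : ℕ)),
              if_neg (by omega : ¬ (i : ℕ) = (j : ℕ)),
              if_neg (by omega : ¬ (i : ℕ) - 1 < (j : ℕ)),
              if_neg (by omega : ¬ (i : ℕ) - 1 = (j : ℕ)),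
              if_neg (by omega : ¬ (i : ℕ) = (j : ℕ)),
              if_neg (by omega : ¬ (i : ℕ) = (j : ℕ) + 1),
              e1, he, e3, e2]
            field_simp
            ring
  -- invertibility of 1 - σ•B₁
  have hAtri : (1 - σ • B₁).BlockTriangular OrderDual.toDual := by
    intro i j hij
    have hij' : (i : Fin m) < j := hij
    simp only [Matrix.sub_apply, Matrix.one_apply, Matrix.smul_apply, hB₁, smul_eq_mul]
    rw [if_neg (by exact fun h => absurd h (ne_of_lt hij')),
      if_neg (by exact fun h => absurd h (ne_of_lt hij')),
      if_neg (by omega : ¬ (i : ℕ) = (j : ℕ) + 1)]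
    ring
  have hdet : (1 - σ • B₁).det = (1 - σ) ^ m := by
    rw [Matrix.det_of_lowerTriangular _ hAtri]
    have : ∀ i : Fin m, (1 - σ • B₁) i i = 1 - σ := by
      intro i
      simp [Matrix.sub_apply, Matrix.one_apply, hB₁]
    rw [Finset.prod_congr rfl (fun i _ => this i)]
    simp
  have hunit : IsUnit (1 - σ • B₁).det := by
    rw [hdet]
    exact (isUnit_iff_ne_zero.mpr (pow_ne_zero _ h1σ))
  have hinv : Bt = (1 - σ • B₁)⁻¹ * B₁ := by
    calc Bt = ((1 - σ • B₁)⁻¹ * (1 - σ • B₁)) * Bt := by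
              rw [Matrix.nonsing_inv_mul _ hunit, Matrix.one_mul]
    _ = (1 - σ • B₁)⁻¹ * ((1 - σ • B₁) * Bt) := by rw [Matrix.mul_assoc]
    _ = (1 - σ • B₁)⁻¹ * B₁ := by rw [hmul]
  refine ⟨hmul, hinv, ?_⟩
  -- charpoly
  have hBtri : (charmatrix Bt).BlockTriangular OrderDual.toDual := by
    intro i j hij
    have hij' : (i : Fin m) < j := hij
    rw [charmatrix_apply_ne _ _ _ (ne_of_lt hij'), hBt,
      if_pos (by exact_mod_cast hij')]
    simp
  rw [Matrix.charpoly, Matrix.det_of_lowerTriangular _ hBtri]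
  have hdiag : ∀ i : Fin m, charmatrix Bt i i = X - C ((1 - σ)⁻¹) := by
    intro i
    rw [charmatrix_apply_eq, hBt]
    simp
  rw [Finset.prod_congr rfl (fun i _ => hdiag i)]
  simp
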